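/- Every homeomorphism of the plane ℂ onto itself is either positively oriented or negatively oriented; in particular, an orientation-preserving homeomorphism h satisfies: for every simple closed curve S and every point w ∈ h(T(S)) \ h(S), the winding number of h restricted to S about w is positive. -/

import Mathlib

open Set

/-- The topological hull of a set `S ⊂ ℂ`. -/
def topHull (S : Set ℂ) : Set ℂ :=
  S ∪ {z | z ∉ S ∧ Bornology.IsBounded (connectedComponentIn Sᶜ z)}

/-- A parameterized simple closed curve in the plane. -/
def JordanLoop (γ : ℝ → ℂ) : Prop :=
  Continuous γ ∧ Function.Periodic γ 1 ∧ Set.InjOn γ (Set.Ico 0 1)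

/-- Winding number of a nonvanishing `1`-periodic loop about the origin. -/
def HasWindingNumber (u : ℝ → ℂ) (n : ℤ) : Prop :=
  Continuous u ∧ Function.Periodic u 1 ∧ (∀ t, u t ≠ 0) ∧
    ∃ θ : ℝ → ℝ, Continuous θ ∧
      (∀ t, u t = (‖u t‖ : ℂ) * Complex.exp (2 * Real.pi * Complex.I * θ t)) ∧
      θ 1 - θ 0 = n

/-- A positively oriented parameterization of a simple closed curve: it winds once
counterclockwise about every point it encloses. -/
def PosParam (γ : ℝ → ℂ) : Prop :=
  JordanLoop γ ∧ ∀ w ∈ topHull (Set.range γ) \ Set.range γ,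
    HasWindingNumber (fun t => γ t - w) 1

/-- `win(f, S, w)`: the winding number of `f ∘ γ` about `w`. -/
def Win (f : ℂ → ℂ) (γ : ℝ → ℂ) (w : ℂ) (n : ℤ) : Prop :=
  HasWindingNumber (fun t => f (γ t) - w) n

/-- `f` is positively oriented. -/
def PositivelyOriented (f : ℂ → ℂ) : Prop :=
  ∀ γ : ℝ → ℂ, PosParam γ → ∀ w ∈ f '' topHull (Set.range γ) \ f '' Set.range γ,
    ∀ n : ℤ, Win f γ w n → 0 < n

/-- `f` is negatively oriented. -/
def NegativelyOriented (f : ℂ → ℂ) : Prop :=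
  ∀ γ : ℝ → ℂ, PosParam γ → ∀ w ∈ f '' topHull (Set.range γ) \ f '' Set.range γ,
    ∀ n : ℤ, Win f γ w n → n < 0

section WindingTheory

open Function

noncomputable section

/-- `ee x = exp(2πi x)`. -/
def ee (x : ℝ) : ℂ := Complex.exp (2 * Real.pi * Complex.I * x)

lemma ee_continuous : Continuous ee := by
  exact Complex.continuous_exp.comp (by continuity)

lemma abs_ee (x : ℝ) : ‖ee x‖ = 1 := by
  rw [ee, Complex.norm_exp]
  convert Real.exp_zero using 2
  simp [Complex.mul_re]

lemma ee_ne_zero (x : ℝ) : ee x ≠ 0 := Complex.exp_ne_zero _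

lemma ee_add (x y : ℝ) : ee (x + y) = ee x * ee y := by
  rw [ee, ee, ee, ← Complex.exp_add]
  congr 1
  push_cast
  ring

lemma ee_int (k : ℤ) : ee k = 1 := by
  rw [ee, Complex.exp_eq_one_iff]
  exact ⟨k, by push_cast; ring⟩

lemma ee_eq_one_iff (x : ℝ) : ee x = 1 ↔ ∃ k : ℤ, x = k := by
  rw [ee, Complex.exp_eq_one_iff]
  constructor
  · rintro ⟨k, hk⟩
    refine ⟨k, ?_⟩
    have h2 : (2 * (Real.pi:ℂ) * Complex.I) ≠ 0 := by
      simp [Complex.I_ne_zero, Complex.ofReal_ne_zero, Real.pi_ne_zero]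
    have hx : (x : ℂ) * (2 * (Real.pi:ℂ) * Complex.I) = (k:ℂ) * (2 * (Real.pi:ℂ) * Complex.I) := by
      rw [← hk]; ring
    have : (x : ℂ) = k := mul_right_cancel₀ h2 hx
    exact_mod_cast this
  · rintro ⟨k, hk⟩
    exact ⟨k, by rw [hk]; push_cast; ring⟩

lemma eq_of_ee_eq {x y : ℝ} (h : ee x = ee y) : ∃ k : ℤ, x - y = k := by
  have h1 : ee (x - y) * ee y = ee y := by
    rw [← ee_add]; rw [sub_add_cancel]; exact h
  have : ee (x - y) = 1 := by
    have := mul_right_cancel₀ (ee_ne_zero y) (h1.trans (one_mul (ee y)).symm)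
    exact this
  exact (ee_eq_one_iff _).1 this

/-- A continuous real function taking only integer values is constant. -/
lemma intValued_const {g : ℝ → ℝ} (hg : Continuous g) (hint : ∀ t, ∃ k : ℤ, g t = k)
    (a b : ℝ) : g a = g b := by
  by_contra hne
  obtain ⟨ka, hka⟩ := hint a
  obtain ⟨kb, hkb⟩ := hint b
  have hkk : ka ≠ kb := by rintro rfl; exact hne (hka.trans hkb.symm)
  set m : ℤ := min ka kb with hm
  have hy : (m : ℝ) + 1/2 ∈ Set.uIcc (g a) (g b) := by
    rw [Set.mem_uIcc]
    rcases le_total ka kb with hle | hle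
    · left
      constructor
      · rw [hka]; have : m = ka := min_eq_left hle; rw [this]; linarith
      · rw [hkb]
        have h1 : m = ka := min_eq_left hle
        have : ka + 1 ≤ kb := by omega
        have : (ka : ℝ) + 1 ≤ kb := by exact_mod_cast this
        rw [h1]; linarith
    · right
      constructor
      · rw [hkb]; have : m = kb := min_eq_right hle; rw [this]; linarith
      · rw [hka]
        have h1 : m = kb := min_eq_right hle
        have : kb + 1 ≤ ka := by omega
        have : (kb : ℝ) + 1 ≤ ka := by exact_mod_cast this
        rw [h1]; linarith
  obtain ⟨t, _, ht⟩ := intermediate_value_uIcc (f := g) (a := a) (b := b) hg.continuousOn hy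
  obtain ⟨j, hj⟩ := hint t
  rw [ht] at hj
  have : 2 * m + 1 = 2 * j := by
    have : (2 * (m:ℝ) + 1) = 2 * j := by linarith
    exact_mod_cast this
  omega


lemma ee_arg (z : ℂ) :
    ee (Complex.arg z / (2 * Real.pi)) = Complex.exp (Complex.arg z * Complex.I) := by
  rw [ee]
  congr 1
  have hπ : (Real.pi : ℂ) ≠ 0 := by exact_mod_cast Real.pi_ne_zero
  push_cast
  field_simp

lemma slitPlane_of_close_one {z : ℂ} (h : ‖z - 1‖ < 1) : z ∈ Complex.slitPlane := by
  rw [Complex.mem_slitPlane_iff]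
  left
  have h2 : Complex.normSq (z - 1) < 1 := by
    rw [← Complex.sq_norm]
    nlinarith [norm_nonneg (z - 1)]
  rw [Complex.normSq_apply] at h2
  simp only [Complex.sub_re, Complex.sub_im, Complex.one_re, Complex.one_im, sub_zero] at h2
  nlinarith [sq_nonneg z.re, sq_nonneg z.im]

/-- From two lift equations, the lift values differ by an integer. -/
lemma lift_diff_int {u : ℝ → ℂ} {θ θ' : ℝ → ℝ} (hu : ∀ t, u t ≠ 0)
    (h : ∀ t, u t = (‖u t‖ : ℂ) * ee (θ t))
    (h' : ∀ t, u t = (‖u t‖ : ℂ) * ee (θ' t)) (t : ℝ) :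
    ∃ k : ℤ, θ t - θ' t = k := by
  apply eq_of_ee_eq
  have habs : (‖u t‖ : ℂ) ≠ 0 := by
    simpa using (norm_ne_zero_iff.mpr (hu t))
  exact mul_left_cancel₀ habs ((h t).symm.trans (h' t))

/-- Uniqueness of the winding number. -/
lemma wind_unique {u : ℝ → ℂ} {n m : ℤ} (hn : HasWindingNumber u n)
    (hm : HasWindingNumber u m) : n = m := by
  obtain ⟨hc, hp, hnz, θ, hθc, hθ, hθn⟩ := hn
  obtain ⟨-, -, -, θ', hθ'c, hθ', hθ'm⟩ := hm
  have key : θ 1 - θ' 1 = θ 0 - θ' 0 :=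
    intValued_const (hθc.sub hθ'c) (lift_diff_int hnz hθ hθ') 1 0
  have : (n : ℝ) = m := by linarith [hθn, hθ'm, key]
  exact_mod_cast this

/-- A lift of a `1`-periodic loop increases by the winding number over each period. -/
lemma lift_add_one {u : ℝ → ℂ} {n : ℤ} {θ : ℝ → ℝ}
    (hp : Function.Periodic u 1) (hnz : ∀ t, u t ≠ 0) (hθc : Continuous θ)
    (hθ : ∀ t, u t = (‖u t‖ : ℂ) * ee (θ t)) (hθn : θ 1 - θ 0 = n) :
    ∀ t, θ (t + 1) = θ t + n := by
  have hint : ∀ t, ∃ k : ℤ, (θ (t + 1) - θ t) = k := by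
    intro t
    apply eq_of_ee_eq
    have h1 := hθ (t + 1)
    rw [hp t] at h1
    have habs : (‖u t‖ : ℂ) ≠ 0 := by
      simpa using (norm_ne_zero_iff.mpr (hnz t))
    exact mul_left_cancel₀ habs (h1.symm.trans (hθ t))
  have hconst := intValued_const (g := fun t => θ (t + 1) - θ t)
    ((hθc.comp (continuous_id.add continuous_const)).sub hθc) hint
  intro t
  have := hconst t 0
  simp only [zero_add] at this
  linarith [hθn]

/-- Iterated version: `θ (m) = θ 0 + m * n`. -/
lemma lift_int_mul {u : ℝ → ℂ} {n : ℤ} {θ : ℝ → ℝ}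
    (hp : Function.Periodic u 1) (hnz : ∀ t, u t ≠ 0) (hθc : Continuous θ)
    (hθ : ∀ t, u t = (‖u t‖ : ℂ) * ee (θ t)) (hθn : θ 1 - θ 0 = n) :
    ∀ (t : ℝ) (m : ℤ), θ (t + m) = θ t + m * n := by
  have key := lift_add_one hp hnz hθc hθ hθn
  intro t m
  induction m using Int.induction_on with
  | zero => simp
  | succ k ih =>
    push_cast at ih ⊢
    rw [← add_assoc, key (t + (k:ℝ)), ih]
    ring
  | pred k ih =>
    push_cast at ih ⊢
    have h2 := key (t + (-(k:ℝ) - 1))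
    rw [show t + (-(k:ℝ) - 1) + 1 = t + -(k:ℝ) by ring, ih] at h2
    have : θ (t + (-(k:ℝ) - 1)) = θ t + -(k:ℝ) * n - n := by linarith
    rw [show t + (-(k:ℝ) - 1) = t + (-(k:ℝ) - 1) by ring] at this
    linarith [this]

/-- The "dog on a leash" lemma: a loop uniformly closer to `u` than `|u|` has the
same winding number. -/
lemma wind_leash {u v : ℝ → ℂ} {n : ℤ} (hu : HasWindingNumber u n)
    (hvc : Continuous v) (hvp : Function.Periodic v 1)
    (hclose : ∀ t, ‖v t - u t‖ < ‖u t‖) :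
    HasWindingNumber v n := by
  obtain ⟨huc, hup, hunz, θ, hθc, hθ, hθn⟩ := hu
  have hvnz : ∀ t, v t ≠ 0 := by
    intro t hv0
    have := hclose t
    rw [hv0] at this
    simp only [zero_sub, norm_neg] at this
    exact absurd this (lt_irrefl _)
  -- the ratio v/u lies in the slit plane (positive real part)
  have hratio : ∀ t, (v t / u t) ∈ Complex.slitPlane := by
    intro t
    have h1 : ‖v t / u t - 1‖ < 1 := by
      rw [show v t / u t - 1 = (v t - u t) / u t by rw [sub_div, div_self (hunz t)]]
      rw [norm_div]
      rw [div_lt_one (by simpa using norm_pos_iff.mpr (hunz t))]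
      exact hclose t
    exact slitPlane_of_close_one h1
  have hwc : Continuous (fun t => v t / u t) := hvc.div huc hunz
  have hαc : Continuous (fun t => Complex.arg (v t / u t) / (2 * Real.pi)) := by
    apply Continuous.div_const
    rw [continuous_iff_continuousAt]
    intro t
    exact ContinuousAt.comp (g := Complex.arg) (Complex.continuousAt_arg (hratio t))
      hwc.continuousAt
  refine ⟨hvc, hvp, hvnz,
    fun t => θ t + Complex.arg (v t / u t) / (2 * Real.pi), hθc.add hαc, ?_, ?_⟩
  · intro t
    set A : ℝ := Complex.arg (v t / u t) / (2 * Real.pi) with hA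
    show v t = (‖v t‖ : ℂ) * ee (θ t + A)
    have hu_eq : u t = (‖u t‖ : ℂ) * ee (θ t) := hθ t
    have hr_eq : v t / u t = (‖v t / u t‖ : ℂ) * ee A := by
      rw [hA, ee_arg]
      exact (Complex.norm_mul_exp_arg_mul_I _).symm
    have hv_eq : u t * (v t / u t) = v t := by
      rw [mul_comm, div_mul_cancel₀ _ (hunz t)]
    have h5 : (‖v t‖ : ℂ) = (‖u t‖ : ℂ) * (‖v t / u t‖ : ℂ) := by
      have h6 : ‖u t‖ ≠ 0 := norm_ne_zero_iff.mpr (hunz t)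
      rw [norm_div]
      push_cast
      exact (mul_div_cancel₀ _ (by exact_mod_cast h6)).symm
    calc v t = u t * (v t / u t) := hv_eq.symm
      _ = ((‖u t‖ : ℂ) * ee (θ t)) * ((‖v t / u t‖ : ℂ) * ee A) := by
          rw [← hu_eq, ← hr_eq]
      _ = ((‖u t‖ : ℂ) * (‖v t / u t‖ : ℂ)) * (ee (θ t) * ee A) := by
          ring
      _ = (‖v t‖ : ℂ) * ee (θ t + A) := by rw [← ee_add, ← h5]
  · have hv10 : v 1 = v 0 := by simpa using hvp 0
    have hu10 : u 1 = u 0 := by simpa using hup 0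
    simp only [hv10, hu10]
    linarith [hθn]


lemma lift_arg (z : ℂ) : z = (‖z‖ : ℂ) * ee (Complex.arg z / (2 * Real.pi)) := by
  rw [ee_arg]
  exact (Complex.norm_mul_exp_arg_mul_I z).symm

lemma lift_prod {a r : ℂ} {x y : ℝ} (hax : a = (‖a‖ : ℂ) * ee x)
    (hry : r = (‖r‖ : ℂ) * ee y) :
    a * r = (‖a * r‖ : ℂ) * ee (x + y) := by
  have habs : (‖a * r‖ : ℂ) = (‖a‖ : ℂ) * (‖r‖ : ℂ) := by
    rw [norm_mul]; push_cast; ring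
  rw [habs, ee_add]
  conv_lhs => rw [hax, hry]
  ring

lemma div_mem_slitPlane {a b : ℂ} (hb : b ≠ 0) (h : ‖a - b‖ < ‖b‖) :
    a / b ∈ Complex.slitPlane := by
  apply slitPlane_of_close_one
  rw [show a / b - 1 = (a - b) / b by rw [sub_div, div_self hb]]
  rw [norm_div, div_lt_one (norm_pos_iff.mpr hb)]
  exact h

/-- Existence of the winding number for continuous nonvanishing periodic loops. -/
lemma wind_exists {u : ℝ → ℂ} (huc : Continuous u) (hup : Function.Periodic u 1)
    (hunz : ∀ t, u t ≠ 0) : ∃ n : ℤ, HasWindingNumber u n := by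
  -- positive lower bound for |u|
  obtain ⟨t₀, ht₀, hmin⟩ := isCompact_Icc.exists_isMinOn (Set.nonempty_Icc.2 zero_le_one)
    ((continuous_norm.comp huc).continuousOn (s := Icc (0:ℝ) 1))
  set m₀ : ℝ := ‖u t₀‖ with hm₀def
  have hm₀ : 0 < m₀ := norm_pos_iff.mpr (hunz t₀)
  have hfract : ∀ t : ℝ, u (Int.fract t) = u t := by
    intro t
    have := hup.sub_int_mul_eq (x := t) ⌊t⌋
    rw [mul_one] at this
    exact this
  have hlow : ∀ t : ℝ, m₀ ≤ ‖u t‖ := by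
    intro t
    rw [← hfract t]
    exact isMinOn_iff.1 hmin _ ⟨Int.fract_nonneg t, (Int.fract_lt_one t).le⟩
  -- uniform continuity on [0,2]
  have hU := (isCompact_Icc (a := (0:ℝ)) (b := 1)).uniformContinuousOn_of_continuous
    huc.continuousOn
  rw [Metric.uniformContinuousOn_iff] at hU
  obtain ⟨δ, hδpos, hδ⟩ := hU m₀ hm₀
  obtain ⟨N, hN⟩ := exists_nat_one_div_lt hδpos
  set M : ℕ := N + 1 with hMdef
  have hMpos : (0:ℝ) < M := by positivity
  have hMδ : 1 / (M:ℝ) < δ := by exact_mod_cast hN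
  -- clamp function
  set c : ℝ → ℝ := fun s => min (max s 0) 1 with hcdef
  have hc01 : ∀ s, c s ∈ Icc (0:ℝ) 1 :=
    fun s => ⟨le_min (le_max_right s 0) zero_le_one, min_le_right _ _⟩
  have hc_eq : ∀ s ∈ Icc (0:ℝ) 1, c s = s := by
    intro s hs
    rw [hcdef]
    simp only
    rw [max_eq_left hs.1, min_eq_left hs.2]
  have hc_zero : ∀ s ≤ (0:ℝ), c s = 0 := by
    intro s hs
    rw [hcdef]
    simp only
    rw [max_eq_right hs, min_eq_left zero_le_one]
  have hc_one : ∀ s, (1:ℝ) ≤ s → c s = 1 := by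
    intro s hs
    rw [hcdef]
    simp only
    rw [min_eq_right]
    exact le_max_of_le_left hs
  have hc_cont : Continuous c := (continuous_id.max continuous_const).min continuous_const
  -- the partial ratio loops
  set R : ℕ → ℝ → ℂ := fun j s => u (((j:ℝ) + c s) / M) / u ((j:ℝ) / M) with hRdef
  have hnode : ∀ j : ℕ, j < M → ∀ s : ℝ,
      ‖u (((j:ℝ) + c s) / M) - u ((j:ℝ) / M)‖ < m₀ := by
    intro j hj s
    have hj1 : ((j:ℝ) + 1) ≤ M := by exact_mod_cast Nat.succ_le_of_lt hj
    have hx : ((j:ℝ) + c s) / M ∈ Icc (0:ℝ) 1 := by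
      constructor
      · apply div_nonneg _ hMpos.le
        have := (hc01 s).1
        positivity
      · rw [div_le_one hMpos]
        have := (hc01 s).2
        linarith
    have hy : (j:ℝ) / M ∈ Icc (0:ℝ) 1 := by
      constructor
      · positivity
      · rw [div_le_one hMpos]
        linarith
    have hdist : dist (((j:ℝ) + c s) / M) ((j:ℝ) / M) < δ := by
      rw [Real.dist_eq]
      have : ((j:ℝ) + c s) / M - (j:ℝ) / M = c s / M := by ring
      rw [this, abs_of_nonneg (div_nonneg (hc01 s).1 hMpos.le)]
      calc c s / M ≤ 1 / M := by gcongr; exact (hc01 s).2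
        _ < δ := hMδ
    have := hδ _ hx _ hy hdist
    rwa [dist_eq_norm] at this
  have hRnz : ∀ j : ℕ, (j:ℝ) / M ∈ Icc (0:ℝ) 1 → True := fun _ _ => trivial
  have hslit : ∀ j : ℕ, j < M → ∀ s : ℝ, R j s ∈ Complex.slitPlane := by
    intro j hj s
    exact div_mem_slitPlane (hunz _) (lt_of_lt_of_le (hnode j hj s) (hlow _))
  -- the angle increments
  set α : ℕ → ℝ → ℝ := fun j s => Complex.arg (R j s) / (2 * Real.pi) with hαdef
  have hα_cont : ∀ j : ℕ, j < M → Continuous (α j) := by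
    intro j hj
    apply Continuous.div_const
    rw [continuous_iff_continuousAt]
    intro s
    have hR_cont : Continuous (R j) := by
      apply Continuous.div
      · exact huc.comp ((continuous_const.add hc_cont).div_const _)
      · exact continuous_const
      · exact fun _ => hunz _
    exact ContinuousAt.comp (g := Complex.arg) (Complex.continuousAt_arg (hslit j hj s))
      hR_cont.continuousAt
  have hα_zero : ∀ j : ℕ, ∀ s ≤ (0:ℝ), α j s = 0 := by
    intro j s hs
    have : R j s = 1 := by
      rw [hRdef]
      simp only
      rw [hc_zero s hs, add_zero, div_self (hunz _)]
    rw [hαdef]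
    simp only [this, Complex.arg_one, zero_div]
  -- the piecewise lift on [0,1]
  set θ₀ : ℝ → ℝ := fun t => Complex.arg (u 0) / (2 * Real.pi) +
    ∑ j ∈ Finset.range M, α j ((M:ℝ) * t - j) with hθ₀def
  have hθ₀_cont : Continuous θ₀ := by
    apply Continuous.add continuous_const
    apply continuous_finset_sum
    intro j hj
    exact (hα_cont j (Finset.mem_range.1 hj)).comp
      ((continuous_const.mul continuous_id).sub continuous_const)
  -- key induction: the lift equation holds on [0, k/M]
  have hkey : ∀ k : ℕ, k ≤ M → ∀ t ∈ Icc (0:ℝ) ((k:ℝ)/M),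
      u t = (‖u t‖ : ℂ) * ee (θ₀ t) := by
    intro k
    induction k with
    | zero =>
      intro _ t ht
      simp only [Nat.cast_zero, zero_div] at ht
      have ht0 : t = 0 := le_antisymm ht.2 ht.1
      subst ht0
      have hθ₀0 : θ₀ 0 = Complex.arg (u 0) / (2 * Real.pi) := by
        rw [hθ₀def]
        simp only
        rw [Finset.sum_eq_zero, add_zero]
        intro j hj
        apply hα_zero
        simp only [mul_zero, zero_sub, neg_nonpos]
        positivity
      rw [hθ₀0]
      exact lift_arg (u 0)
    | succ k ih =>
      intro hk1 t ht
      have hkM : k < M := Nat.lt_of_succ_le hk1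
      rcases le_or_gt t ((k:ℝ)/M) with hle | hgt
      · exact ih hkM.le t ⟨ht.1, hle⟩
      -- now k/M < t ≤ (k+1)/M
      · set s : ℝ := (M:ℝ) * t - k with hsdef
        have hs_pos : 0 < s := by
          rw [hsdef]
          have := (div_lt_iff₀ hMpos).1 hgt
          linarith [this]
        have hs_le : s ≤ 1 := by
          rw [hsdef]
          have h2 : t ≤ ((k:ℝ)+1)/M := by exact_mod_cast ht.2
          have := (le_div_iff₀ hMpos).1 h2
          linarith [this]
        have hcs : c s = s := hc_eq s ⟨hs_pos.le, hs_le⟩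
        -- θ₀ t = θ₀ (k/M) + α k s
        have hθstep : θ₀ t = θ₀ ((k:ℝ)/M) + α k s := by
          have hsum : θ₀ t - θ₀ ((k:ℝ)/M)
              = ∑ j ∈ Finset.range M, (α j ((M:ℝ) * t - j) - α j ((M:ℝ) * ((k:ℝ)/M) - j)) := by
            rw [hθ₀def]
            simp only
            rw [Finset.sum_sub_distrib]
            ring
          have hMk : (M:ℝ) * ((k:ℝ)/M) = k := by field_simp
          have hsingle : ∑ j ∈ Finset.range M,
              (α j ((M:ℝ) * t - j) - α j ((M:ℝ) * ((k:ℝ)/M) - j)) = α k s := by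
            rw [Finset.sum_eq_single k]
            · rw [hMk]
              have : α k ((k:ℝ) - k) = 0 := by
                apply hα_zero
                simp
              rw [← hsdef, this, sub_zero]
            · intro j hj hjk
              rw [hMk]
              rcases lt_or_gt_of_ne hjk with hlt | hgt'
              -- j < k : both arguments ≥ 1
              · have h1 : (1:ℝ) ≤ (M:ℝ) * t - j := by
                  have hj1 : (j:ℝ) + 1 ≤ k := by exact_mod_cast hlt
                  have := (div_lt_iff₀ hMpos).1 hgt
                  linarith
                have h2 : (1:ℝ) ≤ (k:ℝ) - j := by
                  have hj1 : (j:ℝ) + 1 ≤ k := by exact_mod_cast hlt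
                  linarith
                have e1 : c ((M:ℝ) * t - j) = 1 := hc_one _ h1
                have e2 : c ((k:ℝ) - j) = 1 := hc_one _ h2
                rw [hαdef]
                simp only
                rw [hRdef]
                simp only
                rw [e1, e2, sub_self]
              -- j > k : both arguments ≤ 0
              · have hj1 : (k:ℝ) + 1 ≤ j := by exact_mod_cast hgt'
                have h1 : (M:ℝ) * t - j ≤ 0 := by
                  have h2 : t ≤ ((k:ℝ)+1)/M := by exact_mod_cast ht.2
                  have := (le_div_iff₀ hMpos).1 h2
                  linarith
                have h2 : (k:ℝ) - j ≤ 0 := by linarith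
                rw [hα_zero j _ h1, hα_zero j _ h2, sub_self]
            · intro hk'
              exact absurd (Finset.mem_range.2 hkM) (by exact fun h => hk' h)
          linarith [hsum, hsingle]
        -- the multiplicative step
        have htk : ((k:ℝ) + s) / M = t := by
          rw [hsdef]; field_simp; ring
        have hu_split : u t = u ((k:ℝ)/M) * R k s := by
          rw [hRdef]
          simp only
          rw [hcs, htk, mul_comm, div_mul_cancel₀ _ (hunz _)]
        have hIH : u ((k:ℝ)/M) = (‖u ((k:ℝ)/M)‖ : ℂ) * ee (θ₀ ((k:ℝ)/M)) := by
          apply ih hkM.le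
          constructor
          · positivity
          · exact le_refl _
        have hRlift : R k s = (‖R k s‖ : ℂ) * ee (α k s) := lift_arg _
        rw [hu_split, hθstep]
        exact lift_prod hIH hRlift
  -- lift equation on [0,1]
  have hlift01 : ∀ t ∈ Icc (0:ℝ) 1, u t = (‖u t‖ : ℂ) * ee (θ₀ t) := by
    intro t ht
    apply hkey M le_rfl
    rwa [div_self hMpos.ne']
  -- the winding number
  have hu10 : u 1 = u 0 := by simpa using hup 0
  have hint : ∃ n : ℤ, θ₀ 1 - θ₀ 0 = n := by
    apply eq_of_ee_eq
    have h1 := hlift01 1 ⟨zero_le_one, le_rfl⟩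
    have h0 := hlift01 0 ⟨le_rfl, zero_le_one⟩
    rw [hu10] at h1
    have habs : (‖u 0‖ : ℂ) ≠ 0 := by
      simpa using (norm_ne_zero_iff.mpr (hunz 0))
    exact mul_left_cancel₀ habs (h1.symm.trans h0)
  obtain ⟨n, hn⟩ := hint
  refine ⟨n, huc, hup, hunz, fun t => n * t + (θ₀ (Int.fract t) - n * Int.fract t), ?_, ?_, ?_⟩
  · apply Continuous.add (continuous_const.mul continuous_id)
    exact ContinuousOn.comp_fract''
      (f := fun s => θ₀ s - (n:ℝ) * s)
      ((hθ₀_cont.sub (continuous_const.mul continuous_id)).continuousOn)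
      (by simp only [mul_zero, sub_zero, mul_one]; linarith)
  · intro t
    have hs01 : Int.fract t ∈ Icc (0:ℝ) 1 := ⟨Int.fract_nonneg t, (Int.fract_lt_one t).le⟩
    have heq := hlift01 _ hs01
    rw [hfract t] at heq
    have hee : ee ((n:ℝ) * t + (θ₀ (Int.fract t) - n * Int.fract t)) = ee (θ₀ (Int.fract t)) := by
      have hfl : t - Int.fract t = (⌊t⌋ : ℝ) := Int.self_sub_fract t
      have hmul : (n:ℝ) * t - (n:ℝ) * Int.fract t = (n:ℝ) * (⌊t⌋:ℝ) := by
        rw [← mul_sub, hfl]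
      have hsplit : (n:ℝ) * t + (θ₀ (Int.fract t) - n * Int.fract t)
          = θ₀ (Int.fract t) + ((n * ⌊t⌋ : ℤ) : ℝ) := by
        push_cast
        linarith [hmul]
      rw [hsplit, ee_add, ee_int, mul_one]
    calc u t = (‖u t‖ : ℂ) * ee (θ₀ (Int.fract t)) := heq
      _ = (‖u t‖ : ℂ)
          * ee ((n:ℝ) * t + (θ₀ (Int.fract t) - n * Int.fract t)) := by rw [hee]
  · simp only [Int.fract_one, Int.fract_zero, mul_one, mul_zero, add_zero, zero_add, sub_zero]
    linarith



/-- The standard circle loop `t ↦ e^{2πi m t}` has winding number `m`. -/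
lemma wind_circle (m : ℤ) : HasWindingNumber (fun t => ee ((m:ℝ) * t)) m := by
  refine ⟨ee_continuous.comp (continuous_const.mul continuous_id), ?_, fun t => ee_ne_zero _,
    fun t => (m:ℝ) * t, continuous_const.mul continuous_id, ?_, by simp⟩
  · intro t
    show ee ((m:ℝ) * (t + 1)) = ee ((m:ℝ) * t)
    rw [show (m:ℝ) * (t + 1) = (m:ℝ) * t + (m:ℤ) by push_cast; ring, ee_add, ee_int, mul_one]
  · intro t
    show ee ((m:ℝ) * t) = (‖ee ((m:ℝ) * t)‖ : ℂ) * ee ((m:ℝ) * t)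
    rw [abs_ee]
    simp

/-- Homotopy invariance of the winding number. -/
lemma wind_homotopy {K : ℝ → ℝ → ℂ} {n : ℤ}
    (hK : Continuous fun p : ℝ × ℝ => K p.1 p.2)
    (hKp : ∀ s ∈ Icc (0:ℝ) 1, Function.Periodic (K s) 1)
    (hKnz : ∀ s ∈ Icc (0:ℝ) 1, ∀ t, K s t ≠ 0)
    (h0 : HasWindingNumber (K 0) n) : HasWindingNumber (K 1) n := by
  have hsq : IsCompact (Icc (0:ℝ) 1 ×ˢ Icc (0:ℝ) 1) := isCompact_Icc.prod isCompact_Icc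
  obtain ⟨p₀, hp₀, hmin⟩ := hsq.exists_isMinOn
    (Set.Nonempty.prod (Set.nonempty_Icc.2 zero_le_one) (Set.nonempty_Icc.2 zero_le_one))
    ((continuous_norm.comp hK).continuousOn)
  set m₀ : ℝ := ‖K p₀.1 p₀.2‖ with hm₀def
  have hm₀ : 0 < m₀ := norm_pos_iff.mpr (hKnz p₀.1 (mem_prod.1 hp₀).1 p₀.2)
  have hfract : ∀ s ∈ Icc (0:ℝ) 1, ∀ t : ℝ, K s (Int.fract t) = K s t := by
    intro s hs t
    have := (hKp s hs).sub_int_mul_eq (x := t) ⌊t⌋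
    rw [mul_one] at this
    exact this
  have hlow : ∀ s ∈ Icc (0:ℝ) 1, ∀ t : ℝ, m₀ ≤ ‖K s t‖ := by
    intro s hs t
    rw [← hfract s hs t]
    exact isMinOn_iff.1 hmin (s, Int.fract t)
      ⟨hs, ⟨Int.fract_nonneg t, (Int.fract_lt_one t).le⟩⟩
  have hU := hsq.uniformContinuousOn_of_continuous hK.continuousOn
  rw [Metric.uniformContinuousOn_iff] at hU
  obtain ⟨δ, hδpos, hδ⟩ := hU m₀ hm₀
  obtain ⟨N, hN⟩ := exists_nat_one_div_lt hδpos
  set M : ℕ := N + 1 with hMdef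
  have hMpos : (0:ℝ) < M := by positivity
  have hMδ : 1 / (M:ℝ) < δ := by exact_mod_cast hN
  have hmem : ∀ i : ℕ, i ≤ M → ((i:ℝ)/M) ∈ Icc (0:ℝ) 1 := by
    intro i hi
    constructor
    · positivity
    · rw [div_le_one hMpos]; exact_mod_cast hi
  have hstep : ∀ i : ℕ, i ≤ M → HasWindingNumber (K ((i:ℝ)/M)) n := by
    intro i
    induction i with
    | zero => intro _; simpa using h0
    | succ i ih =>
      intro hi1
      have hiM : i ≤ M := Nat.le_of_succ_le hi1
      apply wind_leash (ih hiM)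
      · exact hK.comp (Continuous.prodMk continuous_const continuous_id)
      · exact hKp _ (hmem _ hi1)
      · intro t
        have hdist : dist ((((i:ℕ)+1:ℕ):ℝ)/M, Int.fract t) (((i:ℝ)/M), Int.fract t) < δ := by
          rw [Prod.dist_eq]
          simp only [dist_self]
          rw [max_eq_left dist_nonneg, Real.dist_eq]
          have : (((i:ℕ)+1:ℕ):ℝ)/M - (i:ℝ)/M = 1/M := by push_cast; ring
          rw [this, abs_of_pos (by positivity)]
          exact hMδ
        have hc := hδ _ ⟨hmem _ hi1, ⟨Int.fract_nonneg t, (Int.fract_lt_one t).le⟩⟩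
          _ ⟨hmem _ hiM, ⟨Int.fract_nonneg t, (Int.fract_lt_one t).le⟩⟩ hdist
        rw [dist_eq_norm] at hc
        rw [hfract _ (hmem _ hi1) t, hfract _ (hmem _ hiM) t] at hc
        calc ‖K ((((i:ℕ)+1:ℕ):ℝ)/M) t - K ((i:ℝ)/M) t‖ < m₀ := hc
          _ ≤ ‖K ((i:ℝ)/M) t‖ := hlow _ (hmem _ hiM) t
  have := hstep M le_rfl
  rwa [div_self hMpos.ne'] at this

/-- Speeding a loop up by an integer factor multiplies the winding number. -/
lemma wind_speedup {g : ℝ → ℂ} {n : ℤ} (h : HasWindingNumber g n) (m : ℤ) :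
    HasWindingNumber (fun t => g ((m:ℝ) * t)) (m * n) := by
  obtain ⟨hc, hp, hnz, θ, hθc, hθ, hθn⟩ := h
  have hgm : ∀ x : ℝ, g (x + (m:ℝ)) = g x := by
    intro x
    have := (hp.int_mul m) x
    rwa [mul_one] at this
  refine ⟨hc.comp (continuous_const.mul continuous_id), ?_, fun t => hnz _,
    fun t => θ ((m:ℝ) * t), hθc.comp (continuous_const.mul continuous_id), fun t => hθ _, ?_⟩
  · intro t
    show g ((m:ℝ) * (t + 1)) = g ((m:ℝ) * t)
    rw [show (m:ℝ) * (t + 1) = (m:ℝ) * t + (m:ℝ) by ring]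
    exact hgm _
  · have h1 := lift_int_mul hp hnz hθc hθ hθn 0 m
    simp only [zero_add] at h1
    simp only [mul_one, mul_zero]
    rw [h1]
    push_cast
    ring

/-- The winding number about `w` is constant as `w` ranges over a preconnected set
avoiding the loop. -/
lemma wind_const_on_connected {v : ℝ → ℂ} {s : Set ℂ}
    (hs : IsPreconnected s) (hdisj : ∀ w ∈ s, ∀ t, v t ≠ w)
    {w₀ w₁ : ℂ} (h₀ : w₀ ∈ s) (h₁ : w₁ ∈ s) {n m : ℤ}
    (hvc : Continuous v) (hvp : Function.Periodic v 1)
    (hn : HasWindingNumber (fun t => v t - w₀) n)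
    (hm : HasWindingNumber (fun t => v t - w₁) m) :
    n = m := by
  -- radius function
  set r : ℂ → ℝ := fun w => sInf ((fun t => ‖v t - w‖) '' Icc 0 1) with hrdef
  have hfract : ∀ t : ℝ, v (Int.fract t) = v t := by
    intro t
    have := hvp.sub_int_mul_eq (x := t) ⌊t⌋
    rw [mul_one] at this
    exact this
  have hr : ∀ w : ℂ, (∀ t, v t ≠ w) → 0 < r w ∧ ∀ t, r w ≤ ‖v t - w‖ := by
    intro w hw
    obtain ⟨t₀, ht₀, hmin⟩ := isCompact_Icc.exists_isMinOn (Set.nonempty_Icc.2 zero_le_one)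
      ((continuous_norm.comp (hvc.sub continuous_const)).continuousOn
        (s := Icc (0:ℝ) 1))
    have hleast : IsLeast ((fun t => ‖v t - w‖) '' Icc 0 1)
        (‖v t₀ - w‖) := by
      constructor
      · exact ⟨t₀, ht₀, rfl⟩
      · rintro x ⟨t, ht, rfl⟩
        exact isMinOn_iff.1 hmin t ht
    have hreq : r w = ‖v t₀ - w‖ := hleast.csInf_eq
    constructor
    · rw [hreq]
      exact norm_pos_iff.mpr (sub_ne_zero.2 (hw t₀))
    · intro t
      rw [hreq, ← hfract t]
      exact isMinOn_iff.1 hmin (Int.fract t) ⟨Int.fract_nonneg t, (Int.fract_lt_one t).le⟩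
  -- the local step
  have hstep : ∀ w ∈ s, ∀ k : ℤ, HasWindingNumber (fun t => v t - w) k →
      ∀ w' : ℂ, dist w' w < r w → ∀ k' : ℤ,
        HasWindingNumber (fun t => v t - w') k' → k' = k := by
    intro w hw k hk w' hd k' hk'
    have hleash : HasWindingNumber (fun t => v t - w') k := by
      apply wind_leash hk (hvc.sub continuous_const)
      · intro t
        show v (t + 1) - w' = v t - w'
        rw [hvp t]
      · intro t
        have : ‖(v t - w') - (v t - w)‖ = dist w' w := by
          rw [show (v t - w') - (v t - w) = w - w' by ring]
          rw [dist_comm, Complex.dist_eq]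
        show ‖(v t - w') - (v t - w)‖ < ‖v t - w‖
        rw [this]
        exact lt_of_lt_of_le hd ((hr w (hdisj w hw)).2 t)
    exact wind_unique hk' hleash
  -- connectedness argument
  set A : Set ℂ := {w | w ∈ s ∧ HasWindingNumber (fun t => v t - w) n} with hAdef
  set B : Set ℂ := {w | w ∈ s ∧ ∃ k : ℤ, k ≠ n ∧ HasWindingNumber (fun t => v t - w) k}
    with hBdef
  set U : Set ℂ := ⋃ w ∈ A, Metric.ball w (r w) with hUdef
  set V : Set ℂ := ⋃ w ∈ B, Metric.ball w (r w) with hVdef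
  have hUopen : IsOpen U := isOpen_biUnion fun _ _ => Metric.isOpen_ball
  have hVopen : IsOpen V := isOpen_biUnion fun _ _ => Metric.isOpen_ball
  have hAU : A ⊆ U := by
    intro w hw
    exact mem_biUnion hw (Metric.mem_ball_self (hr w (hdisj w hw.1)).1)
  have hBV : B ⊆ V := by
    intro w hw
    exact mem_biUnion hw (Metric.mem_ball_self (hr w (hdisj w hw.1)).1)
  have hcover : s ⊆ U ∪ V := by
    intro w hw
    obtain ⟨k, hk⟩ := wind_exists (hvc.sub continuous_const)
      (by intro t; show v (t+1) - w = v t - w; rw [hvp t])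
      (fun t => sub_ne_zero.2 (hdisj w hw t))
    by_cases hkn : k = n
    · exact Or.inl (hAU ⟨hw, hkn ▸ hk⟩)
    · exact Or.inr (hBV ⟨hw, k, hkn, hk⟩)
  have hdisjUV : ¬ (s ∩ (U ∩ V)).Nonempty := by
    rintro ⟨x, hxs, hxU, hxV⟩
    obtain ⟨wa, hwa, hxa⟩ := mem_iUnion₂.1 hxU
    obtain ⟨wb, hwb, hxb⟩ := mem_iUnion₂.1 hxV
    obtain ⟨k, hk⟩ := wind_exists (hvc.sub continuous_const)
      (by intro t; show v (t+1) - x = v t - x; rw [hvp t])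
      (fun t => sub_ne_zero.2 (hdisj x hxs t))
    have h1 : k = n := hstep wa hwa.1 n hwa.2 x (Metric.mem_ball.1 hxa) k hk
    obtain ⟨k', hk'ne, hk'⟩ := hwb.2
    have h2 : k = k' := hstep wb hwb.1 k' hk' x (Metric.mem_ball.1 hxb) k hk
    exact hk'ne (h2 ▸ h1)
  have := isPreconnected_iff_subset_of_disjoint.1 hs U V hUopen hVopen hcover
    (by rwa [Set.not_nonempty_iff_eq_empty] at hdisjUV)
  rcases this with hsU | hsV
  · -- w₁ ∈ U : its winding must be n
    have hx := hsU h₁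
    obtain ⟨wa, hwa, hxa⟩ := mem_iUnion₂.1 hx
    exact (hstep wa hwa.1 n hwa.2 w₁ (Metric.mem_ball.1 hxa) m hm).symm
  · -- w₀ ∈ V : contradiction
    have hx := hsV h₀
    obtain ⟨wb, hwb, hxb⟩ := mem_iUnion₂.1 hx
    obtain ⟨k', hk'ne, hk'⟩ := hwb.2
    exact absurd (hstep wb hwb.1 k' hk' w₀ (Metric.mem_ball.1 hxb) n hn).symm hk'ne

/-- Composing with a homeomorphism multiplies the winding number by the winding of
the image of a small circle. -/
lemma wind_comp (h : ℂ ≃ₜ ℂ) {γ : ℝ → ℂ} {z : ℂ} {mv n e : ℤ}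
    (hγz : HasWindingNumber (fun t => γ t - z) mv)
    (hn : HasWindingNumber (fun t => h (γ t) - h z) n)
    (he : HasWindingNumber (fun t => h (z + ee t) - h z) e) :
    n = mv * e := by
  obtain ⟨huc, hup, hunz, θ, hθc, hθ, hθn⟩ := hγz
  have hθadd := lift_add_one hup hunz hθc hθ hθn
  set r : ℝ → ℝ := fun t => ‖γ t - z‖ with hrdef
  have hr_pos : ∀ t, 0 < r t := fun t => norm_pos_iff.mpr (hunz t)
  have hr_cont : Continuous r := continuous_norm.comp huc
  set K : ℝ → ℝ → ℂ := fun s t =>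
    z + ((r t ^ (1 - s) : ℝ) : ℂ) * ee ((1 - s) * θ t + s * ((mv:ℝ) * t)) with hKdef
  have hK_cont : Continuous fun p : ℝ × ℝ => K p.1 p.2 := by
    apply Continuous.add continuous_const
    apply Continuous.mul
    · apply Complex.continuous_ofReal.comp
      rw [continuous_iff_continuousAt]
      intro p
      have h1 : ContinuousAt (fun q : ℝ × ℝ => q.1 ^ q.2) (r p.2, 1 - p.1) :=
        Real.continuousAt_rpow _ (Or.inl (hr_pos p.2).ne')
      have h2 : ContinuousAt (fun p : ℝ × ℝ => (r p.2, 1 - p.1)) p :=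
        ((hr_cont.comp continuous_snd).prodMk
          (continuous_const.sub continuous_fst)).continuousAt
      have h3 := ContinuousAt.comp (x := p) h1 h2
      exact h3
    · apply ee_continuous.comp
      apply Continuous.add
      · exact (continuous_const.sub continuous_fst).mul (hθc.comp continuous_snd)
      · exact continuous_fst.mul ((continuous_const.mul continuous_id).comp continuous_snd)
  have hγp : ∀ t, γ (t + 1) = γ t := by
    intro t
    have := hup t
    simpa using this
  have hK_per : ∀ s : ℝ, Function.Periodic (K s) 1 := by
    intro s t
    have hr1 : r (t + 1) = r t := by rw [hrdef]; simp only; rw [hγp t]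
    have hθ1 : θ (t + 1) = θ t + mv := hθadd t
    rw [hKdef]
    simp only
    rw [hr1, hθ1]
    congr 1
    congr 1
    rw [show (1 - s) * (θ t + (mv:ℝ)) + s * ((mv:ℝ) * (t + 1))
        = ((1 - s) * θ t + s * ((mv:ℝ) * t)) + ((mv:ℤ):ℝ) by push_cast; ring]
    rw [ee_add, ee_int, mul_one]
  have hK_ne : ∀ s t, K s t ≠ z := by
    intro s t hKz
    rw [hKdef] at hKz
    simp only at hKz
    have h0 : ((r t ^ (1 - s) : ℝ) : ℂ) * ee ((1 - s) * θ t + s * ((mv:ℝ) * t)) = 0 := by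
      linear_combination hKz
    have h1 : ((r t ^ (1 - s) : ℝ) : ℂ) ≠ 0 := by
      simp only [ne_eq, Complex.ofReal_eq_zero]
      exact (Real.rpow_pos_of_pos (hr_pos t) _).ne'
    exact (mul_ne_zero h1 (ee_ne_zero _)) h0
  have hK0 : ∀ t, K 0 t = γ t := by
    intro t
    have hθt : γ t - z = ((r t : ℝ) : ℂ) * ee (θ t) := hθ t
    rw [hKdef]
    simp only [sub_zero, Real.rpow_one, one_mul, zero_mul, add_zero]
    rw [← hθt]
    ring
  have hK1 : ∀ t, K 1 t = z + ee ((mv:ℝ) * t) := by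
    intro t
    rw [hKdef]
    simp only [sub_self, Real.rpow_zero, Complex.ofReal_one, one_mul, zero_mul, zero_add]
  -- transport the winding number along the homotopy composed with h
  have hmain : HasWindingNumber (fun t => h (K 1 t) - h z) n := by
    apply wind_homotopy (K := fun s t => h (K s t) - h z)
    · exact (h.continuous.comp hK_cont).sub continuous_const
    · intro s _ t
      show h (K s (t + 1)) - h z = h (K s t) - h z
      rw [hK_per s t]
    · intro s _ t
      exact sub_ne_zero.2 (fun hc => hK_ne s t (h.injective hc))
    · have : (fun t => h (K 0 t) - h z) = fun t => h (γ t) - h z := by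
        funext t; rw [hK0 t]
      rw [this]
      exact hn
  have hmain' : HasWindingNumber (fun t => h (z + ee ((mv:ℝ) * t)) - h z) n := by
    have : (fun t => h (K 1 t) - h z) = fun t => h (z + ee ((mv:ℝ) * t)) - h z := by
      funext t; rw [hK1 t]
    rwa [this] at hmain
  have hspeed : HasWindingNumber (fun t => h (z + ee ((mv:ℝ) * t)) - h z) (mv * e) :=
    wind_speedup he mv
  exact wind_unique hmain' hspeed

lemma circ_wind_exists (h : ℂ ≃ₜ ℂ) (z : ℂ) :
    ∃ e : ℤ, HasWindingNumber (fun t => h (z + ee t) - h z) e := by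
  apply wind_exists
  · exact (h.continuous.comp (continuous_const.add ee_continuous)).sub continuous_const
  · intro t
    show h (z + ee (t + 1)) - h z = h (z + ee t) - h z
    rw [ee_add, show ee 1 = 1 from by rw [show (1:ℝ) = ((1:ℤ):ℝ) by norm_num, ee_int], mul_one]
  · intro t
    apply sub_ne_zero.2
    intro hc
    have h2 := h.injective hc
    exact ee_ne_zero t (add_eq_left.mp h2)

lemma circ_wind_const (h : ℂ ≃ₜ ℂ) (z z' : ℂ) {e e' : ℤ}
    (he : HasWindingNumber (fun t => h (z + ee t) - h z) e)
    (he' : HasWindingNumber (fun t => h (z' + ee t) - h z') e') : e = e' := by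
  set R : ℝ := max (‖z‖) (‖z'‖) + 1 with hRdef
  have hz : ‖z‖ < R := lt_of_le_of_lt (le_max_left _ _) (by rw [hRdef]; linarith)
  have hz' : ‖z'‖ < R := lt_of_le_of_lt (le_max_right _ _) (by rw [hRdef]; linarith)
  have hR1 : (1:ℝ) ≤ R := by
    rw [hRdef]
    have := norm_nonneg z
    have := le_max_left (‖z‖) (‖z'‖)
    linarith
  -- homotopy from the unit circle at w to the big circle
  have key : ∀ (w : ℂ) (k : ℤ), ‖w‖ < R →
      HasWindingNumber (fun t => h (w + ee t) - h w) k →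
      HasWindingNumber (fun t => h (((R:ℝ):ℂ) * ee t) - h w) k := by
    intro w k hw hk
    have hKne : ∀ s ∈ Icc (0:ℝ) 1, ∀ t : ℝ,
        (((1 - s : ℝ) : ℂ) * (w + ee t) + ((s:ℝ):ℂ) * (((R:ℝ):ℂ) * ee t)) ≠ w := by
      intro s hs t hc
      have hre : ((1 - s : ℝ) : ℂ) * (w + ee t) + ((s:ℝ):ℂ) * (((R:ℝ):ℂ) * ee t) - w
          = (((1 - s + s * R : ℝ)) : ℂ) * ee t - ((s:ℝ):ℂ) * w := by
        push_cast
        ring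
      have h0 : (((1 - s + s * R : ℝ)) : ℂ) * ee t - ((s:ℝ):ℂ) * w = 0 := by
        rw [← hre, hc]
        ring
      have hA : (0:ℝ) < 1 - s + s * R - s * ‖w‖ := by
        rcases eq_or_lt_of_le hs.1 with h0 | h0
        · rw [← h0]; norm_num
        · have h3 : (0:ℝ) < R - ‖w‖ := by linarith
          nlinarith [mul_pos h0 h3, hs.2]
      have hnorm : ‖(((1 - s + s * R : ℝ)) : ℂ) * ee t - ((s:ℝ):ℂ) * w‖
          ≥ (1 - s + s * R) - s * ‖w‖ := by
        have hpos : (0:ℝ) < 1 - s + s * R := by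
          nlinarith [hs.1, hs.2, mul_nonneg hs.1 (by linarith : (0:ℝ) ≤ R - 1)]
        have h1 : ‖(((1 - s + s * R : ℝ)) : ℂ) * ee t‖ = 1 - s + s * R := by
          rw [norm_mul, abs_ee, mul_one, Complex.norm_real, Real.norm_eq_abs]
          exact abs_of_pos hpos
        have h2 : ‖((s:ℝ):ℂ) * w‖ = s * ‖w‖ := by
          rw [norm_mul, Complex.norm_real, Real.norm_eq_abs, abs_of_nonneg hs.1]
        calc ‖(((1 - s + s * R : ℝ)) : ℂ) * ee t - ((s:ℝ):ℂ) * w‖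
            ≥ ‖(((1 - s + s * R : ℝ)) : ℂ) * ee t‖ - ‖((s:ℝ):ℂ) * w‖ := by
              have := norm_sub_norm_le ((((1 - s + s * R : ℝ)) : ℂ) * ee t) (((s:ℝ):ℂ) * w)
              linarith [this]
          _ = (1 - s + s * R) - s * ‖w‖ := by rw [h1, h2]
      rw [h0] at hnorm
      simp only [norm_zero] at hnorm
      linarith
    have hres := wind_homotopy
      (K := fun s t => h (((1 - s : ℝ) : ℂ) * (w + ee t) + ((s:ℝ):ℂ) * (((R:ℝ):ℂ) * ee t)) - h w)
      (n := k) ?_ ?_ ?_ ?_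
    · have : (fun t => h (((1 - (1:ℝ) : ℝ) : ℂ) * (w + ee t)
          + (((1:ℝ):ℝ):ℂ) * (((R:ℝ):ℂ) * ee t)) - h w)
          = fun t => h (((R:ℝ):ℂ) * ee t) - h w := by
        funext t
        norm_num
      rwa [this] at hres
    · apply Continuous.sub _ continuous_const
      apply h.continuous.comp
      apply Continuous.add
      · exact (Complex.continuous_ofReal.comp (continuous_const.sub continuous_fst)).mul
          (continuous_const.add (ee_continuous.comp continuous_snd))
      · exact (Complex.continuous_ofReal.comp continuous_fst).mul
          (continuous_const.mul (ee_continuous.comp continuous_snd))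
    · intro s _ t
      show _ = _
      simp only
      rw [ee_add, show ee 1 = 1 from by rw [show (1:ℝ) = ((1:ℤ):ℝ) by norm_num, ee_int],
        mul_one]
    · intro s hs t
      exact sub_ne_zero.2 fun hc => hKne s hs t (h.injective hc)
    · have h4 : HasWindingNumber (fun t => h (((1 - (0:ℝ) : ℝ) : ℂ) * (w + ee t)
          + (((0:ℝ):ℝ):ℂ) * (((R:ℝ):ℂ) * ee t)) - h w) k := by
        have heq0 : (fun t => h (((1 - (0:ℝ) : ℝ) : ℂ) * (w + ee t)
            + (((0:ℝ):ℝ):ℂ) * (((R:ℝ):ℂ) * ee t)) - h w)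
            = fun t => h (w + ee t) - h w := by
          funext t
          norm_num
        rw [heq0]
        exact hk
      exact h4
  have hbz := key z e hz he
  have hbz' := key z' e' hz' he'
  -- constancy over the image of the ball
  apply wind_const_on_connected (v := fun t => h (((R:ℝ):ℂ) * ee t))
    (s := (h : ℂ → ℂ) '' Metric.ball 0 R) ?_ ?_ ?_ ?_ ?_ ?_ hbz hbz'
  · exact ((convex_ball (0:ℂ) R).isPreconnected).image _ h.continuous.continuousOn
  · rintro w ⟨y, hy, rfl⟩ t hc
    have h2 := h.injective hc
    rw [← h2] at hy
    rw [Metric.mem_ball, dist_zero_right, norm_mul, abs_ee, mul_one,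
      Complex.norm_real, Real.norm_eq_abs, abs_of_pos (by linarith : (0:ℝ) < R)] at hy
    exact absurd hy (lt_irrefl _)
  · exact ⟨z, by rw [Metric.mem_ball, dist_zero_right]; exact hz, rfl⟩
  · exact ⟨z', by rw [Metric.mem_ball, dist_zero_right]; exact hz', rfl⟩
  · exact (h.continuous.comp (continuous_const.mul ee_continuous))
  · intro t
    show h (((R:ℝ):ℂ) * ee (t + 1)) = _
    rw [ee_add, show ee 1 = 1 from by rw [show (1:ℝ) = ((1:ℤ):ℝ) by norm_num, ee_int], mul_one]

/-- The degree of a plane homeomorphism: every simple positively-wound loop maps to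
winding number `ε`, a nonzero constant. -/
lemma wind_eps (h : ℂ ≃ₜ ℂ) : ∃ ε : ℤ, ε ≠ 0 ∧ ∀ (γ : ℝ → ℂ) (z : ℂ) (n : ℤ),
    HasWindingNumber (fun t => γ t - z) 1 →
    HasWindingNumber (fun t => h (γ t) - h z) n → n = ε := by
  obtain ⟨ε, hε⟩ := circ_wind_exists h 0
  refine ⟨ε, ?_, ?_⟩
  · intro hε0
    obtain ⟨ε', hε'⟩ := circ_wind_exists h.symm (h 0)
    have h1 : HasWindingNumber (fun t => h.symm (h ((0:ℂ) + ee t)) - h.symm (h 0)) 1 := by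
      have heq : (fun t => h.symm (h ((0:ℂ) + ee t)) - h.symm (h 0))
          = fun t => ee (((1:ℤ):ℝ) * t) := by
        funext t
        rw [Homeomorph.symm_apply_apply, Homeomorph.symm_apply_apply]
        push_cast
        rw [one_mul, zero_add, sub_zero]
      rw [heq]
      exact wind_circle 1
    have hcomp := wind_comp h.symm (γ := fun t => h ((0:ℂ) + ee t)) (z := h 0)
      (mv := ε) (n := 1) (e := ε') hε h1 hε'
    rw [hε0] at hcomp
    simp at hcomp
  · intro γ z n hγz hn
    obtain ⟨ez, hez⟩ := circ_wind_exists h z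
    have hc := wind_comp h hγz hn hez
    have hconst := circ_wind_const h z 0 hez hε
    rw [hc, hconst]
    ring


end

end WindingTheory

/-- Every homeomorphism of the plane onto itself is either positively or
negatively oriented. -/
theorem homeomorph_pos_or_neg_oriented (h : ℂ ≃ₜ ℂ) :
    PositivelyOriented h ∨ NegativelyOriented h := by
  obtain ⟨ε, hne, hkey⟩ := wind_eps h
  have main : ∀ γ : ℝ → ℂ, PosParam γ →
      ∀ w ∈ (h : ℂ → ℂ) '' topHull (Set.range γ) \ (h : ℂ → ℂ) '' Set.range γ,
      ∀ n : ℤ, Win h γ w n → n = ε := by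
    intro γ hγ w hw n hwin
    obtain ⟨z, hzhull, hzw⟩ := hw.1
    have hznot : z ∉ Set.range γ := by
      intro hzr
      exact hw.2 ⟨z, hzr, hzw⟩
    have hγz := hγ.2 z ⟨hzhull, hznot⟩
    have hn : HasWindingNumber (fun t => h (γ t) - h z) n := by
      rw [hzw]
      exact hwin
    have := hkey γ z n hγz hn
    exact this
  rcases lt_or_gt_of_ne hne with hlt | hgt
  · right
    intro γ hγ w hw n hwin
    rw [main γ hγ w hw n hwin]
    exact hlt
  · left
    intro γ hγ w hw n hwin
    rw [main γ hγ w hw n hwin]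
    exact hgt
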